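/- Let n ≥ 7 be odd and G = ⟨g⟩ a cyclic group of order n. Let S = 0^{n−3}·g^{n−3}·(2g)·((n−1)g) and r = n − 4. Then for every zero-sum free sequence T over G with |T| = r + 1, either |Σ_n(S)| < |Σ(T)| or |supp(T)| < min{r+1, |supp(S)| − 1}. -/

import Mathlib

/-- Set of sums of nonempty subsequences of `S`. -/
def subSums {G : Type*} [AddCommMonoid G] (S : Multiset G) : Set G :=
  {x | ∃ T : Multiset G, T ≤ S ∧ T ≠ 0 ∧ T.sum = x}

/-- Set of sums of subsequences of `S` of length exactly `k`. -/
def sumsLen {G : Type*} [AddCommMonoid G] (k : ℕ) (S : Multiset G) : Set G :=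
  {x | ∃ T : Multiset G, T ≤ S ∧ Multiset.card T = k ∧ T.sum = x}

/-- Set of sums of subsequences of `S` of length at least `k`. -/
def sumsGe {G : Type*} [AddCommMonoid G] (k : ℕ) (S : Multiset G) : Set G :=
  {x | ∃ T : Multiset G, T ≤ S ∧ k ≤ Multiset.card T ∧ T.sum = x}

lemma card6_aux {G : Type*} [DecidableEq G] {x1 x2 x3 x4 x5 x6 : G}
    (h12 : x1 ≠ x2) (h13 : x1 ≠ x3) (h14 : x1 ≠ x4) (h15 : x1 ≠ x5) (h16 : x1 ≠ x6)
    (h23 : x2 ≠ x3) (h24 : x2 ≠ x4) (h25 : x2 ≠ x5) (h26 : x2 ≠ x6)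
    (h34 : x3 ≠ x4) (h35 : x3 ≠ x5) (h36 : x3 ≠ x6)
    (h45 : x4 ≠ x5) (h46 : x4 ≠ x6) (h56 : x5 ≠ x6) :
    ({x1, x2, x3, x4, x5, x6} : Finset G).card = 6 := by
  rw [Finset.card_insert_of_notMem (by simp [h12, h13, h14, h15, h16]),
      Finset.card_insert_of_notMem (by simp [h23, h24, h25, h26]),
      Finset.card_insert_of_notMem (by simp [h34, h35, h36]),
      Finset.card_insert_of_notMem (by simp [h45, h46]),
      Finset.card_insert_of_notMem (by simp [h56]),
      Finset.card_singleton]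

lemma triple_le {α : Type*} [DecidableEq α] {a b c : α} {T : Multiset α}
    (hab : a ≠ b) (hac : a ≠ c) (hbc : b ≠ c)
    (ha : a ∈ T) (hb : b ∈ T) (hc : c ∈ T) : ({a, b, c} : Multiset α) ≤ T := by
  rcases Multiset.exists_cons_of_mem ha with ⟨T1, rfl⟩
  have hb1 : b ∈ T1 := by
    rcases Multiset.mem_cons.mp hb with h | h
    · exact absurd h.symm hab
    · exact h
  rcases Multiset.exists_cons_of_mem hb1 with ⟨T2, rfl⟩
  have hc2 : c ∈ T2 := by
    rcases Multiset.mem_cons.mp hc with h | h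
    · exact absurd h.symm hac
    · rcases Multiset.mem_cons.mp h with h' | h'
      · exact absurd h'.symm hbc
      · exact h'
  rcases Multiset.exists_cons_of_mem hc2 with ⟨T3, rfl⟩
  exact Multiset.cons_le_cons a (Multiset.cons_le_cons b (Multiset.cons_le_cons c
    (Multiset.zero_le _)))

lemma main_aux {G : Type*} [AddCommGroup G] [Fintype G] [DecidableEq G]
    (n : ℕ) (hn : 7 ≤ n) (hcard : Fintype.card G = n)
    (htwo : ∀ x : G, x + x = 0 → x = 0)
    (T : Multiset G) (hT0 : (0 : G) ∉ subSums T) (hTlen : Multiset.card T = n - 3)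
    (a b c : G) (hab : a ≠ b) (hac : a ≠ c) (hbc : b ≠ c)
    (habcT : ({a, b, c} : Multiset G) ≤ T) : False := by
  have hsub : ∀ U : Multiset G, U ≤ T → U ≠ 0 → U.sum ≠ 0 :=
    fun U h1 h2 h3 => hT0 ⟨U, h1, h2, h3⟩
  have hW : ∀ W : Multiset G, W ≤ ({a, b, c} : Multiset G) → W ≠ 0 → W.sum ≠ 0 :=
    fun W h1 h2 => hsub W (le_trans h1 habcT) h2
  have leab : ({a, b} : Multiset G) ≤ ({a, b, c} : Multiset G) :=
    Multiset.cons_le_cons a (Multiset.cons_le_cons b (Multiset.zero_le _))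
  have leac : ({a, c} : Multiset G) ≤ ({a, b, c} : Multiset G) :=
    Multiset.cons_le_cons a (Multiset.le_cons_self _ _)
  have lebc : ({b, c} : Multiset G) ≤ ({a, b, c} : Multiset G) :=
    Multiset.le_cons_self _ _
  have ha0 : a ≠ 0 := by
    simpa using hW {a} (Multiset.singleton_le.mpr (by simp)) (by simp)
  have hb0 : b ≠ 0 := by
    simpa using hW {b} (Multiset.singleton_le.mpr (by simp)) (by simp)
  have hc0 : c ≠ 0 := by
    simpa using hW {c} (Multiset.singleton_le.mpr (by simp)) (by simp)
  have hab0 : a + b ≠ 0 := by simpa using hW {a, b} leab (by simp)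
  have hac0 : a + c ≠ 0 := by simpa using hW {a, c} leac (by simp)
  have hbc0 : b + c ≠ 0 := by simpa using hW {b, c} lebc (by simp)
  have haa0 : a + a ≠ 0 := fun h => ha0 (htwo a h)
  have hcc0 : c + c ≠ 0 := fun h => hc0 (htwo c h)
  have hbb0 : b + b ≠ 0 := fun h => hb0 (htwo b h)
  have hne : ∀ u v w : G, v - u = w → w ≠ 0 → u ≠ v := by
    intro u v w hw h0 huv
    apply h0
    rw [← hw, huv, sub_self]
  -- the prefix-sum set
  have hR : (T - {a, b, c}) + {a, b, c} = T := tsub_add_cancel_of_le habcT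
  set R : Multiset G := T - {a, b, c} with hRdef
  have hRT : R ≤ T := tsub_le_self
  have hRcard : Multiset.card R = n - 6 := by
    have h1 := congrArg Multiset.card hR
    rw [Multiset.card_add] at h1
    simp only [hTlen] at h1
    have h2 : Multiset.card ({a, b, c} : Multiset G) = 3 := rfl
    omega
  set L : List G := R.toList with hLdef
  have hLlen : L.length = n - 6 := by
    rw [hLdef, ← Multiset.coe_card, Multiset.coe_toList]
    exact hRcard
  have hkey : ∀ i : ℕ, ((L.take i : List G) : Multiset G) ≤ R := by
    intro i
    conv_rhs => rw [← Multiset.coe_toList R]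
    exact Multiset.coe_le.mpr (L.take_sublist i).subperm
  have hinj : ∀ i ∈ Finset.range (n - 5), ∀ j ∈ Finset.range (n - 5),
      (L.take i).sum = (L.take j).sum → i = j := by
    have key : ∀ i j : ℕ, i ∈ Finset.range (n - 5) → j ∈ Finset.range (n - 5) → i ≤ j →
        (L.take i).sum = (L.take j).sum → i = j := by
      intro i j hi hj hij hsum
      by_contra hne'
      have hilt : i < j := lt_of_le_of_ne hij hne'
      simp only [Finset.mem_range] at hi hj
      have hjlen : j ≤ L.length := by omega
      have hA : ((L.take i : List G) : Multiset G) ≤ ((L.take j : List G) : Multiset G) := by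
        have heq : L.take i = (L.take j).take i := by rw [List.take_take, min_eq_left hij]
        rw [heq]
        exact Multiset.coe_le.mpr ((L.take j).take_sublist i).subperm
      have hD : (↑(L.take i) : Multiset G) + (↑(L.take j) - ↑(L.take i) : Multiset G)
          = (↑(L.take j) : Multiset G) := add_tsub_cancel_of_le hA
      have h1 := congrArg Multiset.sum hD
      rw [Multiset.sum_add, Multiset.sum_coe, Multiset.sum_coe, ← hsum] at h1
      have hDsum : ((↑(L.take j) - ↑(L.take i) : Multiset G)).sum = 0 :=
        add_eq_left.mp h1
      have h2 := congrArg Multiset.card hD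
      rw [Multiset.card_add, Multiset.coe_card, Multiset.coe_card, List.length_take,
        List.length_take, min_eq_left (by omega : i ≤ L.length), min_eq_left hjlen] at h2
      have hD0 : (↑(L.take j) - ↑(L.take i) : Multiset G) ≠ 0 := by
        intro h0
        rw [h0] at h2
        simp at h2
        omega
      exact hsub _ (le_trans (le_trans tsub_le_self (hkey j)) hRT) hD0 hDsum
    intro i hi j hj hsum
    rcases le_total i j with h | h
    · exact key i j hi hj h hsum
    · exact (key j i hj hi h hsum.symm).symm
  set F : Finset G := (Finset.range (n - 5)).image (fun i => (L.take i).sum) with hFdef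
  have hFcard : F.card = n - 5 := by
    rw [hFdef, Finset.card_image_of_injOn
      (fun i hi j hj h => hinj i (Finset.mem_coe.mp hi) j (Finset.mem_coe.mp hj) h),
      Finset.card_range]
  have H : ∀ V : Finset G, V.card = 6 →
      (∀ x ∈ V, ∃ W : Multiset G, W ≤ ({a, b, c} : Multiset G) ∧ W ≠ 0 ∧ W.sum = x) → False := by
    intro V hV6 hVW
    set V' : Finset G := V.image (fun x => -x) with hV'def
    have hV'card : V'.card = 6 := by
      rw [hV'def, Finset.card_image_of_injective _ neg_injective, hV6]
    have hdisj : Disjoint F V' := by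
      rw [Finset.disjoint_left]
      rintro x hxF hxV'
      rw [hFdef, Finset.mem_image] at hxF
      obtain ⟨i, hi, hix⟩ := hxF
      rw [hV'def, Finset.mem_image] at hxV'
      obtain ⟨y, hy, hyx⟩ := hxV'
      obtain ⟨W, hW1, hW2, hW3⟩ := hVW y hy
      have hUle : (↑(L.take i) : Multiset G) + W ≤ T := by
        rw [← hR]
        exact add_le_add (hkey i) hW1
      have hU0 : (↑(L.take i) : Multiset G) + W ≠ 0 := by
        intro h0
        apply hW2
        have hc' := congrArg Multiset.card h0
        rw [Multiset.card_add] at hc'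
        simp only [Multiset.card_zero] at hc'
        exact Multiset.card_eq_zero.mp (by omega)
      apply hsub _ hUle hU0
      rw [Multiset.sum_add, Multiset.sum_coe, hW3, hix, ← hyx, neg_add_cancel]
    have hle : (F ∪ V').card ≤ n := by
      rw [← hcard]
      exact Finset.card_le_univ _
    rw [Finset.card_union_of_disjoint hdisj, hFcard, hV'card] at hle
    omega
  by_cases h1 : a + b = c
  · subst h1
    refine H {a, b, a + b, a + (a + b), b + (a + b), a + (b + (a + b))}
      (card6_aux hab
        (hne _ _ _ (by abel) hb0) (hne _ _ _ (by abel) hc0)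
        (hne _ _ _ (by abel) hbb0) (hne _ _ _ (by abel) hbc0)
        (hne _ _ _ (by abel) ha0) (hne _ _ _ (by abel) haa0)
        (hne _ _ _ (by abel) hc0) (hne _ _ _ (by abel) hac0)
        (hne _ _ _ (by abel) ha0) (hne _ _ _ (by abel) hb0)
        (hne _ _ _ (by abel) hc0)
        (hne _ _ _ (by abel) (sub_ne_zero.mpr (Ne.symm hab)))
        (hne _ _ _ (by abel) hb0) (hne _ _ _ (by abel) ha0)) ?_
    intro x hx
    simp only [Finset.mem_insert, Finset.mem_singleton] at hx
    rcases hx with h | h | h | h | h | h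
    · exact ⟨{a}, Multiset.singleton_le.mpr (by simp), by simp, by rw [h]; simp⟩
    · exact ⟨{b}, Multiset.singleton_le.mpr (by simp), by simp, by rw [h]; simp⟩
    · exact ⟨{a + b}, Multiset.singleton_le.mpr (by simp), by simp, by rw [h]; simp⟩
    · exact ⟨{a, a + b}, leac, by simp, by rw [h]; simp⟩
    · exact ⟨{b, a + b}, lebc, by simp, by rw [h]; simp⟩
    · exact ⟨{a, b, a + b}, le_rfl, by simp, by rw [h]; simp⟩
  by_cases h2 : a + c = b
  · subst h2
    refine H {a, a + c, c, a + (a + c), (a + c) + c, a + ((a + c) + c)}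
      (card6_aux
        (hne _ _ _ (by abel) hc0) hac
        (hne _ _ _ (by abel) hb0) (hne _ _ _ (by abel) hcc0)
        (hne _ _ _ (by abel) hbc0)
        (hne _ _ _ (by abel) (neg_ne_zero.mpr ha0)) (hne _ _ _ (by abel) ha0)
        (hne _ _ _ (by abel) hc0) (hne _ _ _ (by abel) hb0)
        (hne _ _ _ (by abel) haa0) (hne _ _ _ (by abel) hb0)
        (hne _ _ _ (by abel) hab0)
        (hne _ _ _ (by abel) (sub_ne_zero.mpr (Ne.symm hac)))
        (hne _ _ _ (by abel) hc0) (hne _ _ _ (by abel) ha0)) ?_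
    intro x hx
    simp only [Finset.mem_insert, Finset.mem_singleton] at hx
    rcases hx with h | h | h | h | h | h
    · exact ⟨{a}, Multiset.singleton_le.mpr (by simp), by simp, by rw [h]; simp⟩
    · exact ⟨{a + c}, Multiset.singleton_le.mpr (by simp), by simp, by rw [h]; simp⟩
    · exact ⟨{c}, Multiset.singleton_le.mpr (by simp), by simp, by rw [h]; simp⟩
    · exact ⟨{a, a + c}, leab, by simp, by rw [h]; simp⟩
    · exact ⟨{a + c, c}, lebc, by simp, by rw [h]; simp⟩
    · exact ⟨{a, a + c, c}, le_rfl, by simp, by rw [h]; simp⟩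
  · refine H {a, b, c, a + b, a + c, a + (b + c)}
      (card6_aux hab hac
        (hne _ _ _ (by abel) hb0) (hne _ _ _ (by abel) hc0)
        (hne _ _ _ (by abel) hbc0)
        hbc
        (hne _ _ _ (by abel) ha0) (Ne.symm h2) (hne _ _ _ (by abel) hac0)
        (Ne.symm h1) (hne _ _ _ (by abel) ha0) (hne _ _ _ (by abel) hab0)
        (hne _ _ _ (by abel) (sub_ne_zero.mpr (Ne.symm hbc)))
        (hne _ _ _ (by abel) hc0) (hne _ _ _ (by abel) hb0)) ?_
    intro x hx
    simp only [Finset.mem_insert, Finset.mem_singleton] at hx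
    rcases hx with h | h | h | h | h | h
    · exact ⟨{a}, Multiset.singleton_le.mpr (by simp), by simp, by rw [h]; simp⟩
    · exact ⟨{b}, Multiset.singleton_le.mpr (by simp), by simp, by rw [h]; simp⟩
    · exact ⟨{c}, Multiset.singleton_le.mpr (by simp), by simp, by rw [h]; simp⟩
    · exact ⟨{a, b}, leab, by simp, by rw [h]; simp⟩
    · exact ⟨{a, c}, leac, by simp, by rw [h]; simp⟩
    · exact ⟨{a, b, c}, le_rfl, by simp, by rw [h]; simp⟩

theorem stmt12 {G : Type*} [AddCommGroup G] [Fintype G] [DecidableEq G]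
    (n : ℕ) (hn : 7 ≤ n) (hodd : Odd n)
    (g : G) (hcard : Fintype.card G = n) (hord : addOrderOf g = n)
    (S : Multiset G)
    (hS : S = Multiset.replicate (n - 3) (0 : G) + Multiset.replicate (n - 3) g +
      {2 • g, (n - 1) • g})
    (T : Multiset G) (hT0 : (0 : G) ∉ subSums T)
    (hTlen : Multiset.card T = n - 3) :
    (sumsLen n S).ncard < (subSums T).ncard ∨
      T.toFinset.card < min (n - 3) (S.toFinset.card - 1) := by
  refine Or.inr ?_
  have htwo : ∀ x : G, x + x = 0 → x = 0 := by
    intro x hx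
    have h1 : addOrderOf x ∣ 2 :=
      addOrderOf_dvd_iff_nsmul_eq_zero.mpr (by rw [two_nsmul]; exact hx)
    have h2 : addOrderOf x ∣ n := hcard ▸ addOrderOf_dvd_card
    rcases (Nat.dvd_prime Nat.prime_two).mp h1 with h | h
    · exact AddMonoid.addOrderOf_eq_one_iff.mp h
    · exfalso
      rw [h] at h2
      rcases hodd with ⟨k, rfl⟩
      omega
  have hsm : ∀ k : ℕ, k • g = 0 → n ∣ k := fun k hk =>
    hord ▸ addOrderOf_dvd_iff_nsmul_eq_zero.mpr hk
  have hg0 : g ≠ 0 := by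
    intro h
    have := Nat.le_of_dvd one_pos (hsm 1 (by simp [h]))
    omega
  have h2g0 : (2 : ℕ) • g ≠ 0 := fun h => by
    have := Nat.le_of_dvd (by norm_num) (hsm 2 h); omega
  have h3g0 : (3 : ℕ) • g ≠ 0 := fun h => by
    have := Nat.le_of_dvd (by norm_num) (hsm 3 h); omega
  have hgn : (n : ℕ) • g = 0 := by
    rw [← hord]; exact addOrderOf_nsmul_eq_zero g
  have hng : ((n - 1 : ℕ)) • g = -g := by
    have h1 : ((n - 1) + 1 : ℕ) • g = 0 := by
      rw [show (n - 1) + 1 = n from by omega]; exact hgn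
    rw [succ_nsmul] at h1
    exact eq_neg_of_add_eq_zero_left h1
  -- membership of the four elements in S
  have h0S : (0 : G) ∈ S := by
    rw [hS]
    refine Multiset.mem_add.mpr (Or.inl (Multiset.mem_add.mpr (Or.inl ?_)))
    rw [Multiset.mem_replicate]
    exact ⟨by omega, rfl⟩
  have hgS : g ∈ S := by
    rw [hS]
    refine Multiset.mem_add.mpr (Or.inl (Multiset.mem_add.mpr (Or.inr ?_)))
    rw [Multiset.mem_replicate]
    exact ⟨by omega, rfl⟩
  have h2gS : (2 : ℕ) • g ∈ S := by
    rw [hS]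
    exact Multiset.mem_add.mpr (Or.inr (by simp))
  have hngS : ((n - 1 : ℕ)) • g ∈ S := by
    rw [hS]
    exact Multiset.mem_add.mpr (Or.inr (by simp))
  -- distinctness of the four elements
  have d12 : (0 : G) ≠ g := Ne.symm hg0
  have d13 : (0 : G) ≠ (2 : ℕ) • g := Ne.symm h2g0
  have d14 : (0 : G) ≠ ((n - 1 : ℕ)) • g := by
    rw [hng]; exact Ne.symm (neg_ne_zero.mpr hg0)
  have d23 : g ≠ (2 : ℕ) • g := by
    rw [two_nsmul]
    intro h
    exact hg0 (left_eq_add.mp h)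
  have d24 : g ≠ ((n - 1 : ℕ)) • g := by
    rw [hng]
    intro h
    exact h2g0 (by rw [two_nsmul]; exact eq_neg_iff_add_eq_zero.mp h)
  have d34 : (2 : ℕ) • g ≠ ((n - 1 : ℕ)) • g := by
    rw [hng, two_nsmul]
    intro h
    apply h3g0
    have h' : g + g + g = 0 := by rw [h, neg_add_cancel]
    rw [show (3 : ℕ) • g = g + g + g from by
      rw [succ_nsmul, two_nsmul]]
    exact h'
  have hsub4 : ({0, g, (2 : ℕ) • g, ((n - 1 : ℕ)) • g} : Finset G) ⊆ S.toFinset := by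
    intro x hx
    simp only [Finset.mem_insert, Finset.mem_singleton] at hx
    rcases hx with rfl | rfl | rfl | rfl
    · exact Multiset.mem_toFinset.mpr h0S
    · exact Multiset.mem_toFinset.mpr hgS
    · exact Multiset.mem_toFinset.mpr h2gS
    · exact Multiset.mem_toFinset.mpr hngS
  have hcard4 : ({0, g, (2 : ℕ) • g, ((n - 1 : ℕ)) • g} : Finset G).card = 4 := by
    rw [Finset.card_insert_of_notMem (by simp [d12, d13, d14]),
        Finset.card_insert_of_notMem (by simp [d23, d24]),
        Finset.card_insert_of_notMem (by simp [d34]),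
        Finset.card_singleton]
  have hS4 : 4 ≤ S.toFinset.card := hcard4 ▸ Finset.card_le_card hsub4
  have hmin : 3 ≤ min (n - 3) (S.toFinset.card - 1) := by omega
  suffices hT3 : T.toFinset.card < 3 by omega
  by_contra hcon
  push_neg at hcon
  obtain ⟨t, hts, htcard⟩ := Finset.exists_subset_card_eq hcon
  obtain ⟨a, b, c, hab, hac, hbc, rfl⟩ := Finset.card_eq_three.mp htcard
  have haT : a ∈ T := Multiset.mem_toFinset.mp (hts (by simp))
  have hbT : b ∈ T := Multiset.mem_toFinset.mp (hts (by simp))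
  have hcT : c ∈ T := Multiset.mem_toFinset.mp (hts (by simp))
  exact main_aux n hn hcard htwo T hT0 hTlen a b c hab hac hbc
    (triple_le hab hac hbc haT hbT hcT)
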